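/- If α ∈ ℂ satisfies 5α^4 + 6α^2 + 5 = 0, then any point (z0,z1,z3) with z0 + z1 = 0 and z1^2 = -(3/2)(α^2+1) z3^2 is a singular point of the plane quartic F_α(z0,z1,z3) = z0^4 + z1^4 + (1+α^4) z3^4 - 6(α^2 z3^4 + (α^2+1)(z0^2+z1^2) z3^2 + z0^2 z1^2). -/
import Mathlib


noncomputable def Fq (t z0 z1 z3 : ℂ) : ℂ :=
  z0^4 + z1^4 + (1 + t^4) * z3^4
    - 6 * (t^2 * z3^4 + (t^2 + 1) * (z0^2 + z1^2) * z3^2 + z0^2 * z1^2)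

noncomputable def Fq0 (t z0 z1 z3 : ℂ) : ℂ :=
  4*z0^3 - 12*(t^2 + 1)*z0*z3^2 - 12*z0*z1^2

noncomputable def Fq1 (t z0 z1 z3 : ℂ) : ℂ :=
  4*z1^3 - 12*(t^2 + 1)*z1*z3^2 - 12*z1*z0^2

noncomputable def Fq3 (t z0 z1 z3 : ℂ) : ℂ :=
  4*(1 + t^4)*z3^3 - 24*t^2*z3^3 - 12*(t^2 + 1)*(z0^2 + z1^2)*z3

/-- If `5α^4 + 6α^2 + 5 = 0`, `z0 + z1 = 0` and `z1^2 = -(3/2)(α^2+1) z3^2`, then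
`(z0,z1,z3)` is a singular point of the plane quartic `F_α = 0`. -/
theorem singular_point_g22 (α z0 z1 z3 : ℂ) (hα : 5*α^4 + 6*α^2 + 5 = 0)
    (h0 : z0 + z1 = 0) (h1 : z1^2 = -(3/2)*(α^2 + 1)*z3^2) :
    Fq α z0 z1 z3 = 0 ∧ Fq0 α z0 z1 z3 = 0 ∧ Fq1 α z0 z1 z3 = 0 ∧ Fq3 α z0 z1 z3 = 0 := by
  have hz0 : z0 = -z1 := by linear_combination h0
  subst hz0
  refine ⟨?_, ?_, ?_, ?_⟩ <;> simp only [Fq, Fq0, Fq1, Fq3]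
  · linear_combination (-4*(z1^2 + (-(3/2)*(α^2+1))*z3^2) - 12*(α^2+1)*z3^2) * h1 + 2*z3^4 * hα
  · linear_combination 8*z1 * h1
  · linear_combination (-8*z1) * h1
  · linear_combination (-24*(α^2+1)*z3) * h1 + 8*z3^3 * hα
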